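/- Every non-trivial normal subgroup of F₂ × F₂ contains a subgroup isomorphic to F₂ (the free group of rank 2). -/

import Mathlib

namespace Stmt8
open FreeGroup

variable {α : Type*} [DecidableEq α]

/-- no-cancellation condition for adjacent letters -/
def R : (α × Bool) → (α × Bool) → Prop := fun a b => ¬(a.1 = b.1 ∧ a.2 = !b.2)

instance : DecidableRel (R (α := α)) := fun _ _ => by unfold R; infer_instance

lemma chain'_reduce (L : List (α × Bool)) : List.Chain' R (reduce L) := by
  induction L with
  | nil => exact List.isChain_nil
  | cons x L ih =>
    rw [reduce.cons]
    cases h : reduce L with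
    | nil => exact List.isChain_singleton _
    | cons hd tl =>
      rw [h] at ih
      dsimp only
      split_ifs with hc
      · exact ih.tail
      · exact List.isChain_cons_cons.mpr ⟨hc, ih⟩

lemma reduce_eq_self_of_chain' {L : List (α × Bool)} (h : List.Chain' R L) : reduce L = L := by
  induction L with
  | nil => rfl
  | cons x L ih =>
    have h' := List.isChain_cons.mp h
    rw [reduce.cons, ih h'.2]
    cases L with
    | nil => rfl
    | cons hd tl =>
      dsimp only
      rw [if_neg (h'.1 hd rfl)]

lemma toWord_mk_of_chain' {L : List (α × Bool)} (h : List.Chain' R L) : (mk L).toWord = L := by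
  rw [toWord_mk, reduce_eq_self_of_chain' h]

lemma chain'_toWord (x : FreeGroup α) : List.Chain' R x.toWord := by
  rw [← reduce_toWord]; exact chain'_reduce _

lemma mk_cons_cancel {L : List (α × Bool)} {x : α} {b : Bool} :
    mk ((x, b) :: (x, !b) :: L) = mk L :=
  Quot.sound Red.Step.cons_not

lemma cons_eq_append_singleton {γ : Type*} {a : γ} : ∀ {l : List γ},
    a :: l = l ++ [a] → l = List.replicate l.length a
  | [], _ => rfl
  | b :: t, h => by
    simp only [List.cons_append, List.cons.injEq] at h
    obtain ⟨rfl, h2⟩ := h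
    have := cons_eq_append_singleton h2
    simp [List.replicate_succ, ← this]

end Stmt8

namespace Stmt8
open FreeGroup

variable {α : Type*} [DecidableEq α]

lemma commute_gen_aux (s : α) : ∀ (N : ℕ) (x : FreeGroup α), x.norm ≤ N →
    Commute (of s) x → ∃ n : ℤ, x = of s ^ n := by
  intro N
  induction N with
  | zero =>
    intro x hx _
    refine ⟨0, ?_⟩
    have : x.norm = 0 := Nat.le_zero.mp hx
    rw [FreeGroup.norm_eq_zero] at this
    simp [this]
  | succ N ih =>
    intro x hx h
    have hch : List.Chain' R x.toWord := chain'_toWord x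
    cases hw : x.toWord with
    | nil => exact ⟨0, by simpa using toWord_eq_nil_iff.mp hw⟩
    | cons a rest =>
      have hxmk : x = mk (a :: rest) := by rw [← hw, mk_toWord]
      by_cases ha : a = (s, false)
      · -- cancel on the left
        subst ha
        have hrest : List.Chain' R rest := by rw [hw] at hch; exact hch.tail
        have hx' : of s * x = mk rest := by
          rw [hxmk, of, mul_mk]
          exact mk_cons_cancel (x := s) (b := true)
        have hnorm' : (of s * x).norm ≤ N := by
          rw [FreeGroup.norm, hx', toWord_mk_of_chain' hrest]
          have : x.norm = rest.length + 1 := by rw [FreeGroup.norm, hw]; simp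
          omega
        obtain ⟨n, hn⟩ := ih (of s * x) hnorm' ((Commute.refl (of s)).mul_right h)
        refine ⟨n - 1, ?_⟩
        have : x = (of s)⁻¹ * (of s * x) := by group
        rw [this, hn]
        group
      · by_cases hb : (a :: rest).getLast? = some (s, false)
        · -- cancel on the right
          obtain ⟨w', hw'⟩ : ∃ w', a :: rest = w' ++ [(s, false)] := by
            rcases List.getLast?_eq_some_iff.mp hb with ⟨w', hw'⟩
            exact ⟨w', hw'⟩
          have hchw : List.Chain' R (w' ++ [(s, false)]) := by rw [hw, hw'] at hch; exact hch
          have hw'' : List.Chain' R w' := (List.isChain_append.mp hchw).1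
          have hx' : x * of s = mk w' := by
            rw [hxmk, hw', of, mul_mk, List.append_assoc]
            show mk (w' ++ (s, false) :: (s, !false) :: []) = mk w'
            calc mk (w' ++ (s, false) :: (s, !false) :: []) = mk (w' ++ []) :=
                  Quot.sound (Red.Step.not)
              _ = mk w' := by rw [List.append_nil]
          have hnorm' : (x * of s).norm ≤ N := by
            rw [FreeGroup.norm, hx', toWord_mk_of_chain' hw'']
            have : x.norm = w'.length + 1 := by
              rw [FreeGroup.norm, hw, hw']; simp
            omega
          obtain ⟨n, hn⟩ := ih (x * of s) hnorm' (h.mul_right (Commute.refl (of s)))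
          refine ⟨n - 1, ?_⟩
          have : x = (x * of s) * (of s)⁻¹ := by group
          rw [this, hn]
          group
        · -- no cancellation on either side
          have h1 : (of s * x).toWord = (s, true) :: x.toWord := by
            have : of s * x = mk ((s, true) :: x.toWord) := by
              conv_lhs => rw [← mk_toWord (x := x)]
              rw [of, mul_mk]; rfl
            rw [this]
            refine toWord_mk_of_chain' (List.isChain_cons.mpr ⟨?_, hch⟩)
            intro y hy
            rw [hw] at hy
            simp only [List.head?_cons, Option.mem_def, Option.some.injEq] at hy
            subst hy
            rintro ⟨h1', h2'⟩
            exact ha (by cases a with | mk a1 a2 => cases a2 <;> simp_all)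
          have h2 : (x * of s).toWord = x.toWord ++ [(s, true)] := by
            have : x * of s = mk (x.toWord ++ [(s, true)]) := by
              conv_lhs => rw [← mk_toWord (x := x)]
              rw [of, mul_mk]
            rw [this]
            refine toWord_mk_of_chain' (List.isChain_append.mpr ⟨hch, List.isChain_singleton _, ?_⟩)
            intro y hy z hz
            simp only [List.head?_cons, Option.mem_def, Option.some.injEq] at hz
            subst hz
            rintro ⟨h1', h2'⟩
            have hy' : y = (s, false) := by cases y with | mk y1 y2 => simp_all
            apply hb
            rw [hw, hy'] at hy
            exact Option.mem_def.mp hy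
          have heq : (s, true) :: x.toWord = x.toWord ++ [(s, true)] := by
            rw [← h1, ← h2, h]
          have hrep := cons_eq_append_singleton heq
          refine ⟨(x.toWord.length : ℤ), ?_⟩
          have hxw : x.toWord = (of s ^ x.toWord.length).toWord := by
            rw [toWord_of_pow]; exact hrep
          rw [zpow_natCast]
          exact toWord_injective hxw

theorem commute_of_iff_zpow (s : α) (x : FreeGroup α) (h : Commute (of s) x) :
    ∃ n : ℤ, x = of s ^ n :=
  commute_gen_aux s x.norm x le_rfl h

end Stmt8

namespace Stmt8
open FreeGroup

/-- exponent-sum homomorphism -/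
def expSum (s : Fin 2) : FreeGroup (Fin 2) →* Multiplicative ℤ :=
  FreeGroup.lift fun i => Multiplicative.ofAdd (if i = s then 1 else 0)

lemma expSum_of (s i : Fin 2) :
    expSum s (of i) = Multiplicative.ofAdd (if i = s then 1 else 0) :=
  FreeGroup.lift_apply_of

lemma expSum_conj (s : Fin 2) (g x : FreeGroup (Fin 2)) :
    expSum s (g * x * g⁻¹) = expSum s x := by
  have h1 : expSum s (g * x * g⁻¹) = expSum s g * expSum s x * (expSum s g)⁻¹ := by
    rw [MonoidHom.map_mul, MonoidHom.map_mul, MonoidHom.map_inv]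
  rw [h1, mul_comm (expSum s g) (expSum s x), mul_inv_cancel_right]

lemma expSum_zpow_of (s : Fin 2) (n : ℤ) :
    expSum s (of s ^ n) = Multiplicative.ofAdd n := by
  rw [map_zpow, expSum_of, if_pos rfl]
  rw [← ofAdd_zsmul]
  norm_num

lemma eq_one_of_commute_gens (x : FreeGroup (Fin 2))
    (h0 : Commute (of 0) x) (h1 : Commute (of 1) x) : x = 1 := by
  obtain ⟨m, hm⟩ := commute_of_iff_zpow 0 x h0
  obtain ⟨n, hn⟩ := commute_of_iff_zpow 1 x h1
  have e1 : expSum 1 x = Multiplicative.ofAdd 0 := by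
    rw [hm, map_zpow, expSum_of]
    norm_num
  have e2 : expSum 1 x = Multiplicative.ofAdd n := by rw [hn, expSum_zpow_of]
  have : n = 0 := by
    have := e1.symm.trans e2
    exact (Multiplicative.ofAdd.injective this).symm
  rw [hn, this, zpow_zero]

/-- distinct generators do not commute -/
lemma of_mul_of_toWord {α : Type*} [DecidableEq α] (a b : α) :
    ((of a) * (of b) : FreeGroup α).toWord = [(a, true), (b, true)] := by
  rw [of, of, mul_mk]
  refine toWord_mk_of_chain' ?_
  refine List.isChain_cons_cons.mpr ⟨?_, List.isChain_singleton _⟩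
  rintro ⟨_, h2⟩
  simp at h2

lemma eq_of_commute_of {α : Type*} (a b : α) (h : Commute (of a) (of b)) : a = b := by
  classical
  have := congrArg toWord h
  rw [of_mul_of_toWord, of_mul_of_toWord, List.cons.injEq, List.cons.injEq] at this
  exact congrArg Prod.fst this.1

/-- every element of a free group over a one-point-ish type is a power -/
lemma exists_zpow_of_forall_eq {S : Type*} (s₀ : S) (hS : ∀ a : S, a = s₀)
    (x : FreeGroup S) : ∃ n : ℤ, x = of s₀ ^ n := by
  induction x using FreeGroup.induction_on with
  | C1 => exact ⟨0, by simp⟩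
  | of a => exact ⟨1, by rw [hS a, zpow_one]⟩
  | inv_of a ih =>
    obtain ⟨n, hn⟩ := ih
    exact ⟨-n, by rw [hn, ← zpow_neg]⟩
  | mul x y ihx ihy =>
    obtain ⟨n, hn⟩ := ihx
    obtain ⟨m, hm⟩ := ihy
    exact ⟨n + m, by rw [hn, hm, zpow_add]⟩

lemma freeGroup_subsingleton_eq_one {S : Type*} [IsEmpty S] (x : FreeGroup S) : x = 1 := by
  induction x using FreeGroup.induction_on with
  | C1 => rfl
  | of a => exact isEmptyElim a
  | inv_of a ih => rw [ih, inv_one]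
  | mul x y ihx ihy => rw [ihx, ihy, one_mul]

/-- free groups are torsion-free, via Nielsen–Schreier -/
lemma zpow_eq_one_iff {α : Type*} (k : FreeGroup α) (hk : k ≠ 1) {n : ℤ}
    (h : k ^ n = 1) : n = 0 := by
  classical
  set H : Subgroup (FreeGroup α) := Subgroup.zpowers k with hH
  have hkH : k ∈ H := Subgroup.mem_zpowers k
  set K : H := ⟨k, hkH⟩ with hK
  haveI : IsFreeGroup H := inferInstance
  set e := IsFreeGroup.toFreeGroup (G := H) with he
  -- the generators type is nonempty
  have hne : Nonempty (IsFreeGroup.Generators H) := by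
    by_contra hemp
    haveI : IsEmpty (IsFreeGroup.Generators H) := not_nonempty_iff.mp hemp
    have : e K = e 1 := by
      rw [freeGroup_subsingleton_eq_one (e K), freeGroup_subsingleton_eq_one (e 1)]
    have := e.injective this
    rw [hK] at this
    exact hk (by simpa using congrArg Subtype.val this)
  obtain ⟨s₀⟩ := hne
  set χ : H →* Multiplicative ℤ := IsFreeGroup.lift (fun _ => Multiplicative.ofAdd 1) with hχ
  have hχof : χ (IsFreeGroup.of s₀) = Multiplicative.ofAdd 1 := IsFreeGroup.lift_of _ _
  -- of s₀ is a power of K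
  obtain ⟨m, hm⟩ := Subgroup.mem_zpowers_iff.mp (IsFreeGroup.of s₀ : H).2
  have hofK : (IsFreeGroup.of s₀ : H) = K ^ m := by
    apply Subtype.ext
    rw [← hm]
    rfl
  have hd : Multiplicative.toAdd (χ K) * m = 1 := by
    have := congrArg χ hofK
    rw [hχof, map_zpow] at this
    have := congrArg Multiplicative.toAdd this
    simpa [mul_comm] using this.symm
  have hKn : K ^ n = 1 := by
    apply Subtype.ext
    show k ^ n = 1
    exact h
  have : Multiplicative.toAdd (χ K) * n = 0 := by
    have := congrArg χ hKn
    rw [map_zpow, MonoidHom.map_one] at this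
    have := congrArg Multiplicative.toAdd this
    simpa [mul_comm] using this
  have hd0 : Multiplicative.toAdd (χ K) ≠ 0 := by
    intro h0; rw [h0] at hd; simpa using hd
  exact by
    rcases mul_eq_zero.mp this with h' | h'
    · exact absurd h' hd0
    · exact h'

lemma zpow_left_injective {α : Type*} (k : FreeGroup α) (hk : k ≠ 1) {a b : ℤ}
    (h : k ^ a = k ^ b) : a = b := by
  have : k ^ (a - b) = 1 := by
    rw [zpow_sub, h, mul_inv_cancel]
  have := zpow_eq_one_iff k hk this
  omega

end Stmt8

namespace Stmt8
open FreeGroup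

/-- centralizer of `of 0 * of 1` via the automorphism sending a basis to `{of 0, of 0 * of 1}` -/
lemma commute_of01 (k : FreeGroup (Fin 2)) (h : Commute (of 0 * of 1 : FreeGroup (Fin 2)) k) :
    ∃ n : ℤ, k = (of 0 * of 1) ^ n := by
  set F : FreeGroup (Fin 2) →* FreeGroup (Fin 2) :=
    FreeGroup.lift (fun i => if i = 0 then of 0 else of 0 * of 1) with hF
  set G : FreeGroup (Fin 2) →* FreeGroup (Fin 2) :=
    FreeGroup.lift (fun i => if i = 0 then of 0 else (of 0)⁻¹ * of 1) with hG
  have hFG : F.comp G = MonoidHom.id _ := by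
    apply FreeGroup.ext_hom
    intro a
    fin_cases a <;> simp [hF, hG, FreeGroup.lift_apply_of, mul_inv_cancel_left]
  have hGof : G (of 0 * of 1) = of 1 := by
    rw [MonoidHom.map_mul]
    simp [hG, FreeGroup.lift_apply_of, mul_inv_cancel_left]
  have h2 : Commute (of 1 : FreeGroup (Fin 2)) (G k) := by
    have := h.map G
    rwa [hGof] at this
  obtain ⟨n, hn⟩ := commute_of_iff_zpow 1 (G k) h2
  refine ⟨n, ?_⟩
  have hk : F (G k) = k := DFunLike.congr_fun hFG k
  have hFof1 : F (of 1) = of 0 * of 1 := by simp [hF, FreeGroup.lift_apply_of]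
  rw [← hk, hn, MonoidHom.map_zpow, hFof1]

lemma no_abelian (K : Subgroup (FreeGroup (Fin 2)))
    (hconj : ∀ g : FreeGroup (Fin 2), ∀ x ∈ K, g * x * g⁻¹ ∈ K)
    (hab : ∀ x ∈ K, ∀ y ∈ K, Commute x y)
    (c : FreeGroup (Fin 2)) (hcK : c ∈ K) (hc1 : c ≠ 1) : False := by
  classical
  set e := IsFreeGroup.toFreeGroup (G := K) with he
  have hS : ∀ a b : IsFreeGroup.Generators K, a = b := by
    intro a b
    apply eq_of_commute_of
    have h1 : Commute (e.symm (of a)) (e.symm (of b)) := by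
      apply Subtype.ext
      have := hab _ (e.symm (of a)).2 _ (e.symm (of b)).2
      exact this
    have h2 := h1.map e.toMonoidHom
    simpa using h2
  have hne : Nonempty (IsFreeGroup.Generators K) := by
    by_contra hemp
    haveI : IsEmpty (IsFreeGroup.Generators K) := not_nonempty_iff.mp hemp
    have h3 : e ⟨c, hcK⟩ = e 1 := by
      rw [freeGroup_subsingleton_eq_one (e ⟨c, hcK⟩), freeGroup_subsingleton_eq_one (e 1)]
    have := e.injective h3
    exact hc1 (by simpa using congrArg Subtype.val this)
  obtain ⟨s₀⟩ := hne
  set k' : K := e.symm (of s₀) with hk'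
  set k : FreeGroup (Fin 2) := (k' : FreeGroup (Fin 2)) with hk
  have hk1 : k ≠ 1 := by
    intro hone
    have hco : (k' : FreeGroup (Fin 2)) = 1 := hone
    have : k' = 1 := Subtype.ext (by rw [hco]; rfl)
    have h4 : e k' = 1 := by rw [this]; exact MulEquiv.map_one e
    rw [hk', MulEquiv.apply_symm_apply] at h4
    exact FreeGroup.of_ne_one s₀ h4
  have hkK : k ∈ K := k'.2
  have hmem : ∀ x ∈ K, ∃ n : ℤ, x = k ^ n := by
    intro x hx
    obtain ⟨n, hn⟩ := exists_zpow_of_forall_eq s₀ (fun a => hS a s₀) (e ⟨x, hx⟩)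
    refine ⟨n, ?_⟩
    have h5 : (⟨x, hx⟩ : K) = k' ^ n := by
      apply e.injective
      rw [hn, map_zpow, hk', MulEquiv.apply_symm_apply]
    have := congrArg Subtype.val h5
    simpa using this
  have hpm : ∀ g : FreeGroup (Fin 2), g * k * g⁻¹ = k ∨ g * k * g⁻¹ = k⁻¹ := by
    intro g
    obtain ⟨n, hn⟩ := hmem _ (hconj g k hkK)
    obtain ⟨m, hm⟩ := hmem _ (hconj g⁻¹ k hkK)
    have hm' : g⁻¹ * k * g = k ^ m := by rw [← hm]; group
    have hk2 : k ^ (1 : ℤ) = k ^ (m * n) := by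
      have : k = g⁻¹ * (g * k * g⁻¹) * g := by group
      rw [zpow_one]
      calc k = g⁻¹ * (g * k * g⁻¹) * g := by group
        _ = g⁻¹ * k ^ n * g := by rw [hn]
        _ = (g⁻¹ * k * (g⁻¹)⁻¹) ^ n := by rw [conj_zpow]; group
        _ = (g⁻¹ * k * g) ^ n := by rw [inv_inv]
        _ = (k ^ m) ^ n := by rw [hm']
        _ = k ^ (m * n) := by rw [← zpow_mul]
    have h6 : (1 : ℤ) = m * n := zpow_left_injective k hk1 hk2
    rcases Int.mul_eq_one_iff_eq_one_or_neg_one.mp h6.symm with ⟨_, hn1⟩ | ⟨_, hn1⟩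
    · left; rw [hn, hn1, zpow_one]
    · right; rw [hn, hn1]; group
  have habs : ∀ (s : Fin 2) (n : ℤ), k = (of s) ^ n →
      (∃ i : Fin 2, of i * k * (of i)⁻¹ = k⁻¹) → False := by
    intro s n hks ⟨i, hi⟩
    have e1 : expSum s k = (expSum s k)⁻¹ := by
      have h' := expSum_conj s (of i) k
      rw [hi, MonoidHom.map_inv] at h'
      exact h'.symm
    have e2 : expSum s k = Multiplicative.ofAdd n := by rw [hks, expSum_zpow_of]
    have : n = -n := by
      have := e1
      rw [e2] at this
      have := congrArg Multiplicative.toAdd this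
      simpa using this
    have hn0 : n = 0 := by omega
    exact hk1 (by rw [hks, hn0, zpow_zero])
  rcases hpm (of 0) with h0 | h0 <;> rcases hpm (of 1) with h1 | h1
  · -- k central
    have c0 : Commute (of 0 : FreeGroup (Fin 2)) k := by
      have := h0; rw [mul_inv_eq_iff_eq_mul] at this; exact this
    have c1 : Commute (of 1 : FreeGroup (Fin 2)) k := by
      have := h1; rw [mul_inv_eq_iff_eq_mul] at this; exact this
    exact hk1 (eq_one_of_commute_gens k c0 c1)
  · -- commutes with of 0, inverted by of 1
    have c0 : Commute (of 0 : FreeGroup (Fin 2)) k := by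
      have := h0; rw [mul_inv_eq_iff_eq_mul] at this; exact this
    obtain ⟨n, hn⟩ := commute_of_iff_zpow 0 k c0
    exact habs 0 n hn ⟨1, h1⟩
  · have c1 : Commute (of 1 : FreeGroup (Fin 2)) k := by
      have := h1; rw [mul_inv_eq_iff_eq_mul] at this; exact this
    obtain ⟨n, hn⟩ := commute_of_iff_zpow 1 k c1
    exact habs 1 n hn ⟨0, h0⟩
  · -- both invert k : k commutes with of 0 * of 1
    have hcm : Commute (of 0 * of 1 : FreeGroup (Fin 2)) k := by
      have step : (of 0 * of 1) * k * (of 0 * of 1)⁻¹ = k := by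
        have h1' : of 1 * k * (of 1)⁻¹ = k⁻¹ := h1
        have h0' : of 0 * k⁻¹ * (of 0)⁻¹ = k := by
          have := congrArg (fun z => z⁻¹) h0
          simp only [mul_inv_rev, inv_inv] at this
          calc of 0 * k⁻¹ * (of 0)⁻¹ = (of 0 * k * (of 0)⁻¹)⁻¹ := by group
            _ = (k⁻¹)⁻¹ := by rw [h0]
            _ = k := inv_inv k
        calc (of 0 * of 1) * k * (of 0 * of 1)⁻¹
            = of 0 * (of 1 * k * (of 1)⁻¹) * (of 0)⁻¹ := by group
          _ = of 0 * k⁻¹ * (of 0)⁻¹ := by rw [h1']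
          _ = k := h0'
      rw [mul_inv_eq_iff_eq_mul] at step; exact step
    obtain ⟨n, hn⟩ := commute_of01 k hcm
    -- expSum 1 argument with the inversion by of 0
    have e1 : expSum 1 k = (expSum 1 k)⁻¹ := by
      have h' := expSum_conj 1 (of 0) k
      rw [h0, MonoidHom.map_inv] at h'
      exact h'.symm
    have e2 : expSum 1 k = Multiplicative.ofAdd n := by
      rw [hn, MonoidHom.map_zpow, MonoidHom.map_mul, expSum_of, expSum_of]
      norm_num
      rw [← ofAdd_zsmul]
      norm_num
    have hzero : n = -n := by
      have := e1
      rw [e2] at this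
      have := congrArg Multiplicative.toAdd this
      simpa using this
    have hn0 : n = 0 := by omega
    exact hk1 (by rw [hn, hn0, zpow_zero])

end Stmt8

namespace Stmt8
open FreeGroup

lemma embed_of_noncomm (N : Subgroup (FreeGroup (Fin 2) × FreeGroup (Fin 2)))
    (u v : FreeGroup (Fin 2)) (hu : (u, 1) ∈ N) (hv : (v, 1) ∈ N)
    (huv : ¬ Commute u v) :
    ∃ f : FreeGroup (Fin 2) →* FreeGroup (Fin 2) × FreeGroup (Fin 2),
      Function.Injective f ∧ f.range ≤ N := by
  classical
  set H : Subgroup (FreeGroup (Fin 2)) := Subgroup.closure {u, v} with hH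
  have huH : u ∈ H := Subgroup.subset_closure (by simp)
  have hvH : v ∈ H := Subgroup.subset_closure (by simp)
  set e := IsFreeGroup.toFreeGroup (G := H) with he
  have h2 : ∃ s₁ s₂ : IsFreeGroup.Generators H, s₁ ≠ s₂ := by
    by_contra hcon
    push_neg at hcon
    have hcomm : ∀ x y : H, Commute x y := by
      intro x y
      rcases isEmpty_or_nonempty (IsFreeGroup.Generators H) with hemp | ⟨⟨s₀⟩⟩
      · have hall : ∀ z : H, z = 1 := fun z => e.injective (by
          rw [freeGroup_subsingleton_eq_one (e z), freeGroup_subsingleton_eq_one (e 1)])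
        rw [hall x, hall y]
      · have hcommF : Commute (e x) (e y) := by
          obtain ⟨n, hn⟩ := exists_zpow_of_forall_eq s₀ (fun a => hcon a s₀) (e x)
          obtain ⟨m, hm⟩ := exists_zpow_of_forall_eq s₀ (fun a => hcon a s₀) (e y)
          rw [hn, hm]
          exact (Commute.refl (of s₀)).zpow_zpow n m
        have := hcommF.map e.symm.toMonoidHom
        simpa using this
    apply huv
    have hc := hcomm ⟨u, huH⟩ ⟨v, hvH⟩
    have := congrArg Subtype.val hc
    exact this
  obtain ⟨s₁, s₂, hs⟩ := h2
  set j : FreeGroup (Fin 2) →* FreeGroup (IsFreeGroup.Generators H) :=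
    FreeGroup.map (fun i => if i = 0 then s₁ else s₂) with hj
  have hjinj : Function.Injective j := by
    have hid : ∀ x : FreeGroup (Fin 2),
        FreeGroup.map (fun t => if t = s₁ then (0 : Fin 2) else 1) (j x) = x := by
      intro x
      rw [hj, map.comp]
      have hfun : ((fun t => if t = s₁ then (0 : Fin 2) else 1) ∘
          (fun i : Fin 2 => if i = 0 then s₁ else s₂)) = id := by
        funext i
        fin_cases i <;> simp [Function.comp, hs.symm]
      rw [hfun, map.id]
    intro x y hxy
    rw [← hid x, ← hid y, hxy]
  set f : FreeGroup (Fin 2) →* FreeGroup (Fin 2) × FreeGroup (Fin 2) :=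
    (MonoidHom.inl _ _).comp ((H.subtype).comp ((e.symm.toMonoidHom).comp j)) with hf
  refine ⟨f, ?_, ?_⟩
  · intro p q hpq
    have h1 : (↑(e.symm (j p)) : FreeGroup (Fin 2)) = ↑(e.symm (j q)) :=
      congrArg Prod.fst hpq
    exact hjinj (e.symm.injective (Subtype.ext h1))
  · rintro p ⟨x, rfl⟩
    have hwH : (↑(e.symm (j x)) : FreeGroup (Fin 2)) ∈ H := (e.symm (j x)).2
    have hHle : H ≤ N.comap (MonoidHom.inl (FreeGroup (Fin 2)) (FreeGroup (Fin 2))) := by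
      rw [hH]
      apply Subgroup.closure_le _ |>.mpr
      intro z hz
      rcases hz with hz | hz
      · simpa [Subgroup.mem_comap, hz] using hu
      · simp only [Set.mem_singleton_iff] at hz
        simpa [Subgroup.mem_comap, hz] using hv
    exact hHle hwH

lemma main_aux (N : Subgroup (FreeGroup (Fin 2) × FreeGroup (Fin 2)))
    (hnormal : N.Normal) (a b : FreeGroup (Fin 2)) (hab : (a, b) ∈ N) (ha : a ≠ 1) :
    ∃ f : FreeGroup (Fin 2) →* FreeGroup (Fin 2) × FreeGroup (Fin 2),
      Function.Injective f ∧ f.range ≤ N := by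
  classical
  -- step 1 : find c ≠ 1 with (c, 1) ∈ N
  have hx : ∃ x : FreeGroup (Fin 2), ¬ Commute x a := by
    by_contra hcon
    push_neg at hcon
    exact ha (eq_one_of_commute_gens a (hcon (of 0)) (hcon (of 1)))
  obtain ⟨x, hxa⟩ := hx
  set c : FreeGroup (Fin 2) := x * a * x⁻¹ * a⁻¹ with hc
  have hc1 : c ≠ 1 := by
    intro h1
    apply hxa
    have : x * a * x⁻¹ * a⁻¹ = 1 := h1
    have : x * a = a * x := by
      have h2 := congrArg (fun z => z * a * x) this
      simpa [mul_assoc] using h2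
    exact this
  have hcN : (c, 1) ∈ N := by
    have h3 : ((x, 1) : FreeGroup (Fin 2) × FreeGroup (Fin 2)) * (a, b) * (x, 1)⁻¹ ∈ N :=
      hnormal.conj_mem _ hab _
    have h4 : ((x, 1) : FreeGroup (Fin 2) × FreeGroup (Fin 2)) * (a, b) * (x, 1)⁻¹ * (a, b)⁻¹ ∈ N :=
      N.mul_mem h3 (N.inv_mem hab)
    have h5 : ((x, 1) : FreeGroup (Fin 2) × FreeGroup (Fin 2)) * (a, b) * (x, 1)⁻¹ * (a, b)⁻¹
        = (c, 1) := by
      rw [hc]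
      simp [Prod.ext_iff, mul_assoc]
    rwa [h5] at h4
  -- step 2 : the subgroup of first coordinates
  set K : Subgroup (FreeGroup (Fin 2)) :=
    N.comap (MonoidHom.inl (FreeGroup (Fin 2)) (FreeGroup (Fin 2))) with hK
  have hcK : c ∈ K := by simpa [hK, Subgroup.mem_comap] using hcN
  by_cases habK : ∀ y ∈ K, ∀ z ∈ K, Commute y z
  · exfalso
    apply no_abelian K ?_ habK c hcK hc1
    intro g y hy
    have : ((g, 1) : FreeGroup (Fin 2) × FreeGroup (Fin 2)) * (y, 1) * (g, 1)⁻¹ ∈ N :=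
      hnormal.conj_mem _ (by simpa [hK, Subgroup.mem_comap] using hy) _
    simpa [hK, Subgroup.mem_comap] using this
  · push_neg at habK
    obtain ⟨y, hy, z, hz, hyz⟩ := habK
    exact embed_of_noncomm N y z (by simpa [hK, Subgroup.mem_comap] using hy)
      (by simpa [hK, Subgroup.mem_comap] using hz) hyz

end Stmt8

/-- every non-trivial normal subgroup of F₂ × F₂ contains a subgroup
isomorphic to the free group of rank 2. -/
theorem stmt_8 (N : Subgroup (FreeGroup (Fin 2) × FreeGroup (Fin 2)))
    (hnormal : N.Normal) (hN : N ≠ ⊥) :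
    ∃ f : FreeGroup (Fin 2) →* FreeGroup (Fin 2) × FreeGroup (Fin 2),
      Function.Injective f ∧ f.range ≤ N := by
  classical
  obtain ⟨p, hpN, hp1⟩ : ∃ p ∈ N, p ≠ 1 := by
    by_contra hcon
    push_neg at hcon
    apply hN
    ext q
    simp only [Subgroup.mem_bot]
    exact ⟨fun hq => hcon q hq, fun hq => by rw [hq]; exact N.one_mem⟩
  obtain ⟨a, b⟩ := p
  have hab1 : a ≠ 1 ∨ b ≠ 1 := by
    by_contra hcon
    push_neg at hcon
    exact hp1 (by rw [hcon.1, hcon.2]; rfl)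
  rcases hab1 with ha | hb
  · exact Stmt8.main_aux N hnormal a b hpN ha
  · -- swap the two coordinates
    set σ : FreeGroup (Fin 2) × FreeGroup (Fin 2) ≃* FreeGroup (Fin 2) × FreeGroup (Fin 2) :=
      MulEquiv.prodComm with hσ
    set N' : Subgroup (FreeGroup (Fin 2) × FreeGroup (Fin 2)) :=
      Subgroup.map σ.toMonoidHom N with hN'
    have hnormal' : N'.Normal := Subgroup.Normal.map hnormal σ.toMonoidHom σ.surjective
    have hmem : ((b, a) : FreeGroup (Fin 2) × FreeGroup (Fin 2)) ∈ N' :=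
      ⟨(a, b), hpN, rfl⟩
    obtain ⟨f, hfinj, hfle⟩ := Stmt8.main_aux N' hnormal' b a hmem hb
    refine ⟨σ.symm.toMonoidHom.comp f, ?_, ?_⟩
    · intro p q hpq
      exact hfinj (σ.symm.injective hpq)
    · rintro q ⟨x, rfl⟩
      have hfx : f x ∈ N' := hfle ⟨x, rfl⟩
      obtain ⟨y, hyN, hyx⟩ := hfx
      have : σ.symm (f x) = y := by rw [← hyx]; exact σ.symm_apply_apply y
      simpa [this] using hyN
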